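/- Let G be a compact connected Lie group, T a maximal torus, and X a coadjoint orbit of G through a point of t* (identified with the T-fixed points of g*). Then the projection π(X) of X to t* is contained in the convex hull of the Weyl group orbit X ∩ t*, and conversely contains it; i.e., π(X) = conv(W·μ) where μ is the dominant element of X (Kostant convexity theorem). -/

import Mathlib

set_option maxHeartbeats 1000000
set_option linter.unusedSectionVars false
open Matrix Finset
open Finset

variable {ι : Type*} [DecidableEq ι]

lemma sum_le_sum_of_card_eq {f : ι → ℝ} {D F : Finset ι} (h : D.card = F.card)
    (hle : ∀ d ∈ D, ∀ e ∈ F, f d ≤ f e) : ∑ i ∈ D, f i ≤ ∑ i ∈ F, f i := by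
  have e := Finset.equivOfCardEq h
  calc ∑ i ∈ D, f i = ∑ x : D, f x := (Finset.sum_attach D f).symm
    _ ≤ ∑ x : D, f (e x) := Finset.sum_le_sum fun x _ => hle x x.2 (e x) (e x).2
    _ = ∑ y : F, f y := e.sum_comp (fun y : F => f y)
    _ = ∑ i ∈ F, f i := Finset.sum_attach F f

lemma exchange {f : ι → ℝ} {Q C : Finset ι} (hk : C.card ≤ Q.card)
    (h : ∀ j ∈ C \ Q, ∀ r ∈ Q \ C, f j ≤ f r) :
    ∃ C₁, C₁ ⊆ Q ∧ C₁.card = C.card ∧ ∑ i ∈ C, f i ≤ ∑ i ∈ C₁, f i := by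
  have h1 : (C \ Q).card + (C ∩ Q).card = C.card := Finset.card_sdiff_add_card_inter C Q
  have h2 : (Q \ C).card + (Q ∩ C).card = Q.card := Finset.card_sdiff_add_card_inter Q C
  have h3 : (Q ∩ C).card = (C ∩ Q).card := by rw [Finset.inter_comm]
  have hle : (C \ Q).card ≤ (Q \ C).card := by omega
  obtain ⟨F, hFsub, hFcard⟩ := Finset.exists_subset_card_eq hle
  have hdisj : Disjoint (C ∩ Q) F := by
    refine Finset.disjoint_left.2 fun a ha haF => ?_
    exact (Finset.mem_sdiff.1 (hFsub haF)).2 (Finset.mem_of_mem_inter_left ha)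
  refine ⟨(C ∩ Q) ∪ F, ?_, ?_, ?_⟩
  · exact Finset.union_subset (Finset.inter_subset_right) (hFsub.trans Finset.sdiff_subset)
  · rw [Finset.card_union_of_disjoint hdisj, hFcard]; omega
  · rw [Finset.sum_union hdisj, ← Finset.sum_inter_add_sum_sdiff C Q f]
    have := sum_le_sum_of_card_eq (f := f) hFcard.symm
      (fun d hd e he => h d hd e (hFsub he))
    linarith

lemma hlp {n : ℕ} (S : Set (Fin n → ℝ))
    (hswap : ∀ d ∈ S, ∀ σ : Equiv.Perm (Fin n), d ∘ σ ∈ S)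
    (hT : ∀ d ∈ S, ∀ p q : Fin n, p ≠ q → ∀ t : ℝ, 0 ≤ t → t ≤ 1 →
      Function.update (Function.update d p (t * d p + (1-t) * d q)) q
        ((1-t) * d p + t * d q) ∈ S) :
    ∀ (A : Finset (Fin n)) (y : Fin n → ℝ), y ∈ S → ∀ x : Fin n → ℝ,
      (∀ i, i ∉ A → x i = y i) →
      (∑ i ∈ A, x i = ∑ i ∈ A, y i) →
      (∀ B ⊆ A, ∃ B', B' ⊆ A ∧ B'.card = B.card ∧ ∑ i ∈ B, x i ≤ ∑ i ∈ B', y i) →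
      x ∈ S := by
  intro A
  induction A using Finset.strongInduction with
  | _ A ih =>
  intro y hy x hout hsum hmaj
  rcases A.eq_empty_or_nonempty with rfl | hAne
  · have : x = y := funext fun i => hout i (by simp)
    exact this ▸ hy
  obtain ⟨a, ha, hamax⟩ := A.exists_max_image x hAne
  by_cases hcase : ∀ i ∈ A, x a ≤ y i
  · -- all y-values on A are at least the max of x: forces x = y
    have hle : ∀ i ∈ A, x i ≤ y i := fun i hi => (hamax i hi).trans (hcase i hi)
    have heq : ∀ i ∈ A, x i = y i :=
      (Finset.sum_eq_sum_iff_of_le hle).1 hsum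
    have : x = y := funext fun i => by
      by_cases hi : i ∈ A
      · exact heq i hi
      · exact hout i hi
    exact this ▸ hy
  · push_neg at hcase
    obtain ⟨q0, hq0A, hq0⟩ := hcase
    -- the set P of positions in A with y-value ≥ x a
    set P : Finset (Fin n) := A.filter (fun i => x a ≤ y i) with hP
    -- P is nonempty, using the majorization hypothesis on {a}
    have hPne : P.Nonempty := by
      obtain ⟨B', hB'sub, hB'card, hB'le⟩ := hmaj {a} (by simpa using ha)
      rw [Finset.card_singleton] at hB'card
      obtain ⟨p0, rfl⟩ := Finset.card_eq_one.1 hB'card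
      refine ⟨p0, Finset.mem_filter.2 ⟨hB'sub (by simp), ?_⟩⟩
      simpa using hB'le
    obtain ⟨p, hpP, hpmin⟩ := P.exists_min_image y hPne
    have hpA : p ∈ A := (Finset.mem_filter.1 hpP).1
    have hxap : x a ≤ y p := (Finset.mem_filter.1 hpP).2
    -- q : the element of A \ P with maximal y-value
    have hQne : (A.filter (fun i => y i < x a)).Nonempty :=
      ⟨q0, Finset.mem_filter.2 ⟨hq0A, hq0⟩⟩
    obtain ⟨q, hqF, hqmax⟩ := _root_.id ((A.filter (fun i => y i < x a)).exists_max_image y hQne)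
    have hqA : q ∈ A := (Finset.mem_filter.1 hqF).1
    have hyq : y q < x a := (Finset.mem_filter.1 hqF).2
    have hqP : q ∉ P := fun hq => absurd (Finset.mem_filter.1 hq).2 (not_le.2 hyq)
    have hpq : p ≠ q := fun h => hqP (h ▸ hpP)
    have hyqp : y q < y p := hyq.trans_le hxap
    -- the T-transform parameter
    set t : ℝ := (x a - y q) / (y p - y q) with htdef
    have ht0 : 0 ≤ t := div_nonneg (by linarith) (by linarith)
    have ht1 : t ≤ 1 := by
      rw [div_le_one (by linarith)]; linarith
    have htmul : t * (y p - y q) = x a - y q := by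
      rw [htdef, div_mul_cancel₀]; linarith
    set u : Fin n → ℝ := Function.update (Function.update y p (t * y p + (1-t) * y q)) q
      ((1-t) * y p + t * y q) with hu
    have hup : u p = x a := by
      rw [hu, Function.update_of_ne hpq, Function.update_self]; nlinarith [htmul]
    have huq : u q = y p + y q - x a := by
      rw [hu, Function.update_self]; nlinarith [htmul]
    have huo : ∀ i, i ≠ p → i ≠ q → u i = y i := fun i hip hiq => by
      rw [hu, Function.update_of_ne hiq, Function.update_of_ne hip]
    have huS : u ∈ S := hT y hy p q hpq t ht0 ht1
    set w : Fin n → ℝ := u ∘ (Equiv.swap a p) with hw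
    have hwS : w ∈ S := hswap u huS _
    have hwa : w a = x a := by rw [hw]; simp [Equiv.swap_apply_left, hup]
    have hswapA : ∀ i, i ∈ A → Equiv.swap a p i ∈ A := by
      intro i hi
      rcases Equiv.swap_apply_def a p i with _
      by_cases h1 : i = a
      · simpa [h1, Equiv.swap_apply_left] using hpA
      by_cases h2 : i = p
      · simpa [h2, Equiv.swap_apply_right] using ha
      · rwa [Equiv.swap_apply_of_ne_of_ne h1 h2]
    -- sum of u over any subset of A containing both p and q equals sum of y
    have hsumu : ∀ C, C ⊆ A → p ∈ C → q ∈ C → ∑ i ∈ C, u i = ∑ i ∈ C, y i := by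
      intro C hCA hpC hqC
      have h1 : ∑ i ∈ C, u i = ((1-t) * y p + t * y q) + ∑ i ∈ C \ {q},
          Function.update y p (t * y p + (1-t) * y q) i := by
        rw [hu, Finset.sum_update_of_mem hqC]
      have hpCq : p ∈ C \ {q} := Finset.mem_sdiff.2 ⟨hpC, by simp [hpq]⟩
      have h2 : ∑ i ∈ C \ {q}, Function.update y p (t * y p + (1-t) * y q) i
          = (t * y p + (1-t) * y q) + ∑ i ∈ (C \ {q}) \ {p}, y i :=
        Finset.sum_update_of_mem hpCq y _
      have h3 : ∑ i ∈ C \ {q}, y i = ∑ i ∈ (C \ {q}) \ {p}, y i + y p :=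
        Finset.sum_eq_sum_sdiff_singleton_add hpCq y
      have h4 : ∑ i ∈ C, y i = ∑ i ∈ C \ {q}, y i + y q :=
        Finset.sum_eq_sum_sdiff_singleton_add hqC y
      rw [h1, h2]; rw [h3] at h4; linarith
    -- transporting sums along the swap
    have himg : ∀ C : Finset (Fin n), C ⊆ A → p ∉ C →
        ∃ B', B' ⊆ A.erase a ∧ B'.card = C.card ∧ ∑ i ∈ B', w i = ∑ i ∈ C, u i := by
      intro C hCA hpC
      refine ⟨C.image (Equiv.swap a p), ?_, ?_, ?_⟩
      · intro j hj
        obtain ⟨i, hiC, rfl⟩ := Finset.mem_image.1 hj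
        refine Finset.mem_erase.2 ⟨?_, hswapA i (hCA hiC)⟩
        intro h
        have hip : i = p := by
          have := congrArg (Equiv.swap a p) h
          rwa [Equiv.swap_apply_self, Equiv.swap_apply_left] at this
        exact hpC (hip ▸ hiC)
      · exact Finset.card_image_of_injective _ (Equiv.injective _)
      · rw [Finset.sum_image (fun i _ j _ h => Equiv.injective _ h)]
        refine Finset.sum_congr rfl fun i _ => ?_
        rw [hw]
        simp only [Function.comp_apply, Equiv.swap_apply_self]
    have hAs : A.erase a ⊂ A := Finset.erase_ssubset ha
    have hiff : ∀ i, i ∈ A ↔ Equiv.swap a p i ∈ A := fun i =>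
      ⟨hswapA i, fun h => by simpa [Equiv.swap_apply_self] using hswapA _ h⟩
    refine ih (A.erase a) hAs w hwS x ?_ ?_ ?_
    · intro i hi
      rcases Decidable.em (i = a) with rfl | hia
      · exact hwa.symm
      · have hiA : i ∉ A := fun h => hi (Finset.mem_erase.2 ⟨hia, h⟩)
        have hip : i ≠ p := fun h => hiA (h ▸ hpA)
        have hiq : i ≠ q := fun h => hiA (h ▸ hqA)
        rw [hw]
        simp only [Function.comp_apply, Equiv.swap_apply_of_ne_of_ne hia hip]
        rw [huo i hip hiq]
        exact hout i hiA
    · have hA1 : ∑ i ∈ A.erase a, x i + x a = ∑ i ∈ A, x i := Finset.sum_erase_add A x ha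
      have hA2 : ∑ i ∈ A.erase a, w i + w a = ∑ i ∈ A, w i := Finset.sum_erase_add A w ha
      have hAw : ∑ i ∈ A, w i = ∑ i ∈ A, u i := by
        rw [hw]
        exact Finset.sum_equiv (Equiv.swap a p) hiff (fun i _ => rfl)
      have hAu : ∑ i ∈ A, u i = ∑ i ∈ A, y i := hsumu A (Finset.Subset.refl A) hpA hqA
      rw [hwa] at hA2
      linarith
    · intro B hB
      have hBA : B ⊆ A := hB.trans (Finset.erase_subset a A)
      have haB : a ∉ B := fun h => (Finset.mem_erase.1 (hB h)).1 rfl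
      by_cases hk : B.card < P.card
      · -- few elements : use top elements of P.erase p
        obtain ⟨C, hCA, hCcard, hCle⟩ := hmaj B hBA
        have hQcard : C.card ≤ (P.erase p).card := by
          rw [Finset.card_erase_of_mem hpP, hCcard]; omega
        have hcond : ∀ j ∈ C \ (P.erase p), ∀ r ∈ (P.erase p) \ C, y j ≤ y r := by
          intro j hj r hr
          have hrP : r ∈ P.erase p := (Finset.mem_sdiff.1 hr).1
          have hrc : x a ≤ y r := (Finset.mem_filter.1 (Finset.mem_erase.1 hrP).2).2
          have hpr : y p ≤ y r := hpmin r (Finset.mem_erase.1 hrP).2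
          have hjC : j ∈ C := (Finset.mem_sdiff.1 hj).1
          have hjn : j ∉ P.erase p := (Finset.mem_sdiff.1 hj).2
          by_cases hjp : j = p
          · rw [hjp]; exact hpr
          · have hjP : j ∉ P := fun h => hjn (Finset.mem_erase.2 ⟨hjp, h⟩)
            have hxj : ¬ (x a ≤ y j) := fun h => hjP (Finset.mem_filter.2 ⟨hCA hjC, h⟩)
            linarith
        obtain ⟨C₁, hC₁sub, hC₁card, hC₁le⟩ := exchange (f := y) hQcard hcond
        have hC₁A : C₁ ⊆ A := fun i hi =>
          (Finset.mem_filter.1 (Finset.mem_erase.1 (hC₁sub hi)).2).1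
        have hpC₁ : p ∉ C₁ := fun h => (Finset.mem_erase.1 (hC₁sub h)).1 rfl
        have hqC₁ : q ∉ C₁ := fun h => hqP (Finset.mem_erase.1 (hC₁sub h)).2
        obtain ⟨B', hB'sub, hB'card, hB'sum⟩ := himg C₁ hC₁A hpC₁
        refine ⟨B', hB'sub, by rw [hB'card, hC₁card, hCcard], ?_⟩
        have huC₁ : ∑ i ∈ C₁, u i = ∑ i ∈ C₁, y i :=
          Finset.sum_congr rfl fun i hi =>
            huo i (fun h => hpC₁ (h ▸ hi)) (fun h => hqC₁ (h ▸ hi))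
        rw [hB'sum, huC₁]; linarith
      · push_neg at hk
        have hBa : (insert a B).card = B.card + 1 := Finset.card_insert_of_notMem haB
        have hBaA : insert a B ⊆ A := Finset.insert_subset ha hBA
        obtain ⟨C, hCA, hCcard, hCle⟩ := hmaj (insert a B) hBaA
        have hsumBa : ∑ i ∈ insert a B, x i = x a + ∑ i ∈ B, x i := Finset.sum_insert haB
        have hPA : P ⊆ A := Finset.filter_subset _ _
        have hiqP : insert q P ⊆ A := Finset.insert_subset hqA hPA
        have hcardiqP : (insert q P).card = P.card + 1 := Finset.card_insert_of_notMem hqP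
        have hcardC : C.card = B.card + 1 := by rw [hCcard, hBa]
        have hCA' : C.card ≤ A.card := Finset.card_le_card hCA
        have hiqPA : (insert q P).card ≤ A.card := Finset.card_le_card hiqP
        have hDQ : (A \ C).card ≤ (A \ (insert q P)).card := by
          rw [Finset.card_sdiff_of_subset hCA, Finset.card_sdiff_of_subset hiqP]; omega
        have hcond2 : ∀ j ∈ (A \ C) \ (A \ insert q P), ∀ r ∈ (A \ insert q P) \ (A \ C),
            (fun i => -y i) j ≤ (fun i => -y i) r := by
          intro j hj r hr
          obtain ⟨hj1, hj2⟩ := Finset.mem_sdiff.1 hj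
          obtain ⟨hr1, hr3⟩ := Finset.mem_sdiff.1 hr
          obtain ⟨hjA, hjC⟩ := Finset.mem_sdiff.1 hj1
          obtain ⟨hrA, hr2⟩ := Finset.mem_sdiff.1 hr1
          have hjqP : j ∈ insert q P := by
            by_contra h; exact hj2 (Finset.mem_sdiff.2 ⟨hjA, h⟩)
          have hrC : r ∈ C := by
            by_contra h; exact hr3 (Finset.mem_sdiff.2 ⟨hrA, h⟩)
          have hrq : r ≠ q := fun h => hr2 (h ▸ Finset.mem_insert_self q P)
          have hrP : r ∉ P := fun h => hr2 (Finset.mem_insert_of_mem h)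
          have hry : y r < x a := by
            by_contra h
            exact hrP (Finset.mem_filter.2 ⟨hrA, not_lt.1 h⟩)
          have hryq : y r ≤ y q := hqmax r (Finset.mem_filter.2 ⟨hrA, hry⟩)
          rcases Finset.mem_insert.1 hjqP with rfl | hjP
          · simpa using hryq
          · have hxj : x a ≤ y j := (Finset.mem_filter.1 hjP).2
            simp only; linarith
        obtain ⟨D₁, hD₁sub, hD₁card, hD₁le⟩ := exchange (f := fun i => -y i) hDQ hcond2
        have hD₁A : D₁ ⊆ A := hD₁sub.trans Finset.sdiff_subset
        have hsumD : ∑ i ∈ D₁, y i ≤ ∑ i ∈ A \ C, y i := by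
          have h8 : -∑ i ∈ A \ C, y i ≤ -∑ i ∈ D₁, y i := by
            simpa [Finset.sum_neg_distrib] using hD₁le
          linarith
        have e1 : ∑ i ∈ A \ D₁, y i + ∑ i ∈ D₁, y i = ∑ i ∈ A, y i :=
          Finset.sum_sdiff hD₁A
        have e2 : ∑ i ∈ A \ C, y i + ∑ i ∈ C, y i = ∑ i ∈ A, y i :=
          Finset.sum_sdiff hCA
        have hsC : ∑ i ∈ C, y i ≤ ∑ i ∈ A \ D₁, y i := by linarith
        have hpC₂ : p ∈ A \ D₁ := Finset.mem_sdiff.2 ⟨hpA, fun h =>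
          (Finset.mem_sdiff.1 (hD₁sub h)).2 (Finset.mem_insert_of_mem hpP)⟩
        have hqC₂ : q ∈ A \ D₁ := Finset.mem_sdiff.2 ⟨hqA, fun h =>
          (Finset.mem_sdiff.1 (hD₁sub h)).2 (Finset.mem_insert_self q P)⟩
        have hcardC₂ : (A \ D₁).card = B.card + 1 := by
          rw [Finset.card_sdiff_of_subset hD₁A, hD₁card, Finset.card_sdiff_of_subset hCA]; omega
        have hsumC₂u : ∑ i ∈ A \ D₁, u i = ∑ i ∈ A \ D₁, y i :=
          hsumu (A \ D₁) Finset.sdiff_subset hpC₂ hqC₂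
        have hsC₂e : ∑ i ∈ (A \ D₁).erase p, u i + x a = ∑ i ∈ A \ D₁, u i := by
          have h7 := Finset.sum_erase_add (A \ D₁) u hpC₂
          rwa [hup] at h7
        have hpe : p ∉ (A \ D₁).erase p := Finset.notMem_erase p _
        obtain ⟨B', hB'sub, hB'card, hB'sum⟩ :=
          himg ((A \ D₁).erase p) ((Finset.erase_subset p _).trans Finset.sdiff_subset) hpe
        refine ⟨B', hB'sub, ?_, ?_⟩
        · rw [hB'card, Finset.card_erase_of_mem hpC₂, hcardC₂]; omega
        · rw [hB'sum]
          rw [hsumBa] at hCle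
          linarith

lemma permMatrix_entry (σ : Equiv.Perm (Fin n)) (i j : Fin n) :
    σ.permMatrix ℂ i j = if σ i = j then 1 else 0 := by
  simp [Equiv.Perm.permMatrix, PEquiv.toMatrix_apply, Equiv.toPEquiv_apply, Option.mem_def]

lemma permMatrix_mem_unitaryGroup (σ : Equiv.Perm (Fin n)) :
    σ.permMatrix ℂ ∈ Matrix.unitaryGroup (Fin n) ℂ := by
  rw [Matrix.mem_unitaryGroup_iff']
  ext i k
  simp only [Matrix.mul_apply, Matrix.star_apply, permMatrix_entry, Matrix.one_apply]
  rw [Finset.sum_eq_single (σ⁻¹ i)]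
  · by_cases h : i = k <;>
      simp [h, Equiv.apply_eq_iff_eq_symm_apply, Equiv.Perm.inv_def, eq_comm]
  · intro j _ hj
    have h1 : ¬ (σ j = i) := fun h => hj (by simp [← h])
    simp [h1]
  · simp

lemma perm_conj_diag (M : Matrix (Fin n) (Fin n) ℂ) (σ : Equiv.Perm (Fin n)) (i : Fin n) :
    (σ.permMatrix ℂ * M * star (σ.permMatrix ℂ)) i i = M (σ i) (σ i) := by
  have h1 : ∀ k, (σ.permMatrix ℂ * M) i k = M (σ i) k := by
    intro k
    rw [Matrix.mul_apply, Finset.sum_eq_single (σ i)]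
    · simp [permMatrix_entry, Equiv.toPEquiv_apply]
    · intro j _ hj
      have : ¬ (σ i = j) := fun h => hj h.symm
      simp [permMatrix_entry, Equiv.toPEquiv_apply, this]
    · simp
  rw [Matrix.mul_apply, Finset.sum_eq_single (σ i)]
  · simp [h1, Matrix.star_apply, permMatrix_entry, Equiv.toPEquiv_apply]
  · intro j _ hj
    have : ¬ (σ i = j) := fun h => hj h.symm
    simp [Matrix.star_apply, permMatrix_entry, Equiv.toPEquiv_apply, this]
  · simp

open Matrix Finset

variable {n : ℕ}

noncomputable def rotMat (p q : Fin n) (c s : ℝ) (z : ℂ) : Matrix (Fin n) (Fin n) ℂ :=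
  Matrix.of fun i j =>
    if i = p then (if j = p then (c : ℂ) else if j = q then s * z else 0)
    else if i = q then (if j = p then -(s : ℂ) * star z else if j = q then (c : ℂ) else 0)
    else if i = j then 1 else 0

lemma rotMat_apply (p q : Fin n) (c s : ℝ) (z : ℂ) (i j : Fin n) :
    rotMat p q c s z i j =
      if i = p then (if j = p then (c : ℂ) else if j = q then s * z else 0)
      else if i = q then (if j = p then -(s : ℂ) * star z else if j = q then (c : ℂ) else 0)
      else if i = j then 1 else 0 := rfl

lemma rotMat_row_supp (p q : Fin n) (c s : ℝ) (z : ℂ) (i j : Fin n)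
    (hi : i = p ∨ i = q) (hjp : j ≠ p) (hjq : j ≠ q) : rotMat p q c s z i j = 0 := by
  rcases hi with rfl | rfl <;> simp [rotMat_apply, hjp, hjq] <;> aesop

lemma sum_over_pair {f : Fin n → ℂ} (hpq : p ≠ q) (h0 : ∀ j, j ≠ p → j ≠ q → f j = 0) :
    ∑ j, f j = f p + f q := by
  rw [← Finset.sum_pair hpq]
  refine (Finset.sum_subset (Finset.subset_univ _) ?_).symm
  intro j _ hj
  simp only [Finset.mem_insert, Finset.mem_singleton] at hj
  push_neg at hj
  exact h0 j hj.1 hj.2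

lemma rotMat_mem_unitaryGroup {p q : Fin n} (hpq : p ≠ q) {c s : ℝ} {z : ℂ}
    (hc : (c:ℂ)^2 + (s:ℂ)^2 = 1) (hz : z * star z = 1) :
    rotMat p q c s z ∈ Matrix.unitaryGroup (Fin n) ℂ := by
  have hqp : q ≠ p := hpq.symm
  have hz' : z * (starRingEnd ℂ) z = 1 := hz
  rw [Matrix.mem_unitaryGroup_iff]
  ext i k
  rw [Matrix.mul_apply]
  by_cases hip : i = p <;> by_cases hiq : i = q
  · exact absurd (hip ▸ hiq) (by simpa [hip] using hpq)
  rotate_left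
  · -- i = q
    rw [sum_over_pair hpq (fun j hj1 hj2 => by
      simp [Matrix.star_apply, rotMat_row_supp p q c s z _ _ (Or.inr hiq) hj1 hj2])]
    by_cases hkp : k = p <;> by_cases hkq : k = q
    · exact absurd (hkp ▸ hkq) (by simpa [hkp] using hpq)
    · simp only [rotMat_apply, Matrix.star_apply, Matrix.one_apply, hip, hiq, hkp, hkq]
      simp [hpq, hqp, star_mul', star_neg, star_star, Complex.conj_ofReal, Complex.star_def]
      ring
    · simp only [rotMat_apply, Matrix.star_apply, Matrix.one_apply, hip, hiq, hkp, hkq]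
      simp [hpq, hqp, star_mul', star_neg, star_star, Complex.conj_ofReal, Complex.star_def]
      linear_combination ((s:ℂ))^2 * hz' + hc
    · have hqk : ¬ q = k := fun h => hkq h.symm
      simp only [rotMat_apply, Matrix.star_apply, Matrix.one_apply, hip, hiq, hkp, hkq]
      simp [hpq, hqp, hkp, hkq, hqk]
  · -- i ∉ {p, q}
    rw [Finset.sum_eq_single i]
    · have h1 : rotMat p q c s z i i = 1 := by simp [rotMat_apply, hip, hiq]
      rw [h1, one_mul, Matrix.star_apply]
      by_cases hkp : k = p
      · have h2 : rotMat p q c s z k i = 0 := by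
          simp [rotMat_apply, hkp, hip, hiq]
        rw [h2, star_zero, Matrix.one_apply, if_neg (fun h : i = k => hip (h.trans hkp))]
      · by_cases hkq : k = q
        · have h2 : rotMat p q c s z k i = 0 := by
            simp [rotMat_apply, hkq, hqp, hip, hiq]
          rw [h2, star_zero, Matrix.one_apply, if_neg (fun h : i = k => hiq (h.trans hkq))]
        · have h2 : rotMat p q c s z k i = if k = i then 1 else 0 := by
            simp [rotMat_apply, hkp, hkq]
          rw [h2, Matrix.one_apply]
          by_cases h : i = k
          · simp [h]
          · simp only [if_neg h, star_zero, if_neg (fun h2 : k = i => h h2.symm)]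
    · intro j _ hj
      have h3 : rotMat p q c s z i j = 0 := by
        simp [rotMat_apply, hip, hiq, (Ne.symm hj : ¬ i = j)]
      rw [h3, zero_mul]
    · simp
  · -- i = p
    rw [sum_over_pair hpq (fun j hj1 hj2 => by
      simp [Matrix.star_apply, rotMat_row_supp p q c s z _ _ (Or.inl hip) hj1 hj2])]
    by_cases hkp : k = p <;> by_cases hkq : k = q
    · exact absurd (hkp ▸ hkq) (by simpa [hkp] using hpq)
    · simp only [rotMat_apply, Matrix.star_apply, Matrix.one_apply, hip, hiq, hkp, hkq]
      simp [hpq, hqp, star_mul', star_neg, star_star, Complex.conj_ofReal, Complex.star_def]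
      linear_combination ((s:ℂ))^2 * hz' + hc
    · simp only [rotMat_apply, Matrix.star_apply, Matrix.one_apply, hip, hiq, hkp, hkq]
      simp [hpq, hqp, star_mul', star_neg, star_star, Complex.conj_ofReal, Complex.star_def]
      ring
    · have hpk : ¬ p = k := fun h => hkp h.symm
      simp only [rotMat_apply, Matrix.star_apply, Matrix.one_apply, hip, hiq, hkp, hkq]
      simp [hpq, hqp, hkp, hkq, hpk]

lemma rotMat_col_supp (p q : Fin n) (c s : ℝ) (z : ℂ) (i j : Fin n)
    (hi : i ≠ p) (hiq : i ≠ q) (hij : i ≠ j) : rotMat p q c s z i j = 0 := by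
  simp [rotMat_apply, hi, hiq, hij]

lemma rotMat_mul_p {p q : Fin n} (hpq : p ≠ q) (B : Matrix (Fin n) (Fin n) ℂ)
    (c s : ℝ) (z : ℂ) (k : Fin n) :
    (rotMat p q c s z * B) p k = (c:ℂ) * B p k + (s:ℂ) * z * B q k := by
  rw [Matrix.mul_apply, sum_over_pair hpq (fun j hj1 hj2 => by
    rw [rotMat_row_supp p q c s z _ _ (Or.inl rfl) hj1 hj2, zero_mul])]
  simp [rotMat_apply, hpq, hpq.symm]

lemma rotMat_mul_q {p q : Fin n} (hpq : p ≠ q) (B : Matrix (Fin n) (Fin n) ℂ)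
    (c s : ℝ) (z : ℂ) (k : Fin n) :
    (rotMat p q c s z * B) q k = -(s:ℂ) * star z * B p k + (c:ℂ) * B q k := by
  rw [Matrix.mul_apply, sum_over_pair hpq (fun j hj1 hj2 => by
    rw [rotMat_row_supp p q c s z _ _ (Or.inr rfl) hj1 hj2, zero_mul])]
  simp [rotMat_apply, hpq, hpq.symm]

lemma rot_conj_diag_p {p q : Fin n} (hpq : p ≠ q) (B : Matrix (Fin n) (Fin n) ℂ)
    (c s : ℝ) {z : ℂ} (hz : z * star z = 1) :
    (rotMat p q c s z * B * star (rotMat p q c s z)) p p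
      = (c:ℂ)^2 * B p p + (s:ℂ)^2 * B q q + (c:ℂ)*(s:ℂ) * (z * B q p + star z * B p q) := by
  have hz' : z * (starRingEnd ℂ) z = 1 := hz
  rw [Matrix.mul_apply, sum_over_pair hpq (fun j hj1 hj2 => by
    rw [Matrix.star_apply, rotMat_row_supp p q c s z _ _ (Or.inl rfl) hj1 hj2, star_zero,
      mul_zero])]
  rw [rotMat_mul_p hpq, rotMat_mul_p hpq]
  simp only [Matrix.star_apply, rotMat_apply, if_pos rfl, if_neg hpq, if_neg hpq.symm,
    star_mul', Complex.conj_ofReal, Complex.star_def]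
  simp only [if_true, star_mul', Complex.conj_ofReal, Complex.star_def, star_neg, star_star,
    _root_.map_mul]
  linear_combination ((s:ℂ))^2 * B q q * hz'

lemma rot_conj_diag_q {p q : Fin n} (hpq : p ≠ q) (B : Matrix (Fin n) (Fin n) ℂ)
    (c s : ℝ) {z : ℂ} (hz : z * star z = 1) :
    (rotMat p q c s z * B * star (rotMat p q c s z)) q q
      = (s:ℂ)^2 * B p p + (c:ℂ)^2 * B q q - (c:ℂ)*(s:ℂ) * (z * B q p + star z * B p q) := by
  have hz' : z * (starRingEnd ℂ) z = 1 := hz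
  rw [Matrix.mul_apply, sum_over_pair hpq (fun j hj1 hj2 => by
    rw [Matrix.star_apply, rotMat_row_supp p q c s z _ _ (Or.inr rfl) hj1 hj2, star_zero,
      mul_zero])]
  rw [rotMat_mul_q hpq, rotMat_mul_q hpq]
  simp only [Matrix.star_apply, rotMat_apply, if_pos rfl, if_neg hpq, if_neg hpq.symm,
    star_mul', Complex.conj_ofReal, Complex.star_def, star_neg, star_star]
  simp only [if_true, star_mul', Complex.conj_ofReal, Complex.star_def, star_neg, star_star,
    _root_.map_mul, map_neg, Complex.conj_conj]
  linear_combination ((s:ℂ))^2 * B p p * hz'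

lemma rot_conj_diag_other {p q : Fin n} (hpq : p ≠ q) (B : Matrix (Fin n) (Fin n) ℂ)
    (c s : ℝ) (z : ℂ) (i : Fin n) (hip : i ≠ p) (hiq : i ≠ q) :
    (rotMat p q c s z * B * star (rotMat p q c s z)) i i = B i i := by
  rw [Matrix.mul_apply, Finset.sum_eq_single i]
  · rw [Matrix.mul_apply, Finset.sum_eq_single i]
    · simp [Matrix.star_apply, rotMat_apply, hip, hiq]
    · intro j _ hj
      rw [rotMat_col_supp p q c s z i j hip hiq (fun h => hj h.symm), zero_mul]
    · simp
  · intro k _ hk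
    rw [Matrix.star_apply, rotMat_col_supp p q c s z i k hip hiq (fun h => hk h.symm),
      star_zero, mul_zero]
  · simp

def diagSet (A : Matrix (Fin n) (Fin n) ℂ) : Set (Fin n → ℝ) :=
  {d : Fin n → ℝ | ∃ U ∈ Matrix.unitaryGroup (Fin n) ℂ,
      ∀ i : Fin n, d i = ((U * A * star U) i i).re}

lemma conj_rearrange (A U V : Matrix (Fin n) (Fin n) ℂ) :
    (V * U) * A * star (V * U) = V * (U * A * star U) * star V := by
  rw [Matrix.star_mul]
  simp only [Matrix.mul_assoc]

lemma diagSet_swap {A : Matrix (Fin n) (Fin n) ℂ} {d : Fin n → ℝ} (hd : d ∈ diagSet A)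
    (σ : Equiv.Perm (Fin n)) : d ∘ σ ∈ diagSet A := by
  obtain ⟨U, hU, hdU⟩ := hd
  refine ⟨σ.permMatrix ℂ * U, mul_mem (permMatrix_mem_unitaryGroup σ) hU, fun i => ?_⟩
  rw [conj_rearrange, perm_conj_diag]
  exact hdU (σ i)

lemma diagSet_T {A : Matrix (Fin n) (Fin n) ℂ} (hA : A.IsHermitian)
    {d : Fin n → ℝ} (hd : d ∈ diagSet A) (p q : Fin n) (hpq : p ≠ q)
    (t : ℝ) (ht0 : 0 ≤ t) (ht1 : t ≤ 1) :
    Function.update (Function.update d p (t * d p + (1-t) * d q)) q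
      ((1-t) * d p + t * d q) ∈ diagSet A := by
  obtain ⟨U, hU, hdU⟩ := hd
  set B := U * A * star U with hBdef
  have hB : B.IsHermitian := by
    have h := Matrix.isHermitian_mul_mul_conjTranspose U hA
    rwa [← Matrix.star_eq_conjTranspose] at h
  set c : ℝ := Real.sqrt t with hcdef
  set s : ℝ := Real.sqrt (1-t) with hsdef
  have hc2 : c^2 = t := Real.sq_sqrt ht0
  have hs2 : s^2 = 1 - t := Real.sq_sqrt (by linarith)
  have hc : (c:ℂ)^2 + (s:ℂ)^2 = 1 := by
    rw [← Complex.ofReal_pow, ← Complex.ofReal_pow, hc2, hs2]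
    push_cast; ring
  set z : ℂ := if B p q = 0 then 1 else Complex.I * B p q / (‖B p q‖ : ℂ) with hzdef
  have hqp : B q p = star (B p q) := (hB.apply q p).symm
  have hz : z * star z = 1 := by
    rw [hzdef]
    split_ifs with h
    · simp
    · have ha : ((‖B p q‖ : ℝ) : ℂ) ≠ 0 := by
        simpa [Complex.ofReal_eq_zero] using (norm_ne_zero_iff.2 h)
      rw [Complex.star_def]
      simp only [map_div₀, _root_.map_mul, Complex.conj_I, Complex.conj_ofReal]
      rw [div_mul_div_comm]
      rw [div_eq_one_iff_eq (by exact mul_ne_zero ha ha)]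
      have h1 : Complex.I * B p q * (-Complex.I * (starRingEnd ℂ) (B p q))
          = B p q * (starRingEnd ℂ) (B p q) := by
        linear_combination (-(B p q * (starRingEnd ℂ) (B p q))) * Complex.I_sq
      rw [h1, Complex.mul_conj, Complex.normSq_eq_norm_sq]
      push_cast
      ring
  have hcross : z * B q p + star z * B p q = 0 := by
    rw [hqp, hzdef]
    split_ifs with h
    · simp [h]
    · have ha : ((‖B p q‖ : ℝ) : ℂ) ≠ 0 := by
        simpa [Complex.ofReal_eq_zero] using (norm_ne_zero_iff.2 h)
      rw [Complex.star_def]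
      simp only [map_div₀, _root_.map_mul, Complex.conj_I, Complex.conj_ofReal]
      field_simp
      ring
  refine ⟨rotMat p q c s z * U, mul_mem (rotMat_mem_unitaryGroup hpq hc hz) hU, fun i => ?_⟩
  rw [conj_rearrange, ← hBdef]
  by_cases hip : i = p
  · subst hip
    rw [Function.update_of_ne hpq, Function.update_self, rot_conj_diag_p hpq B c s hz,
      hcross, mul_zero, add_zero]
    have hre : ((c:ℂ)^2 * B i i + (s:ℂ)^2 * B q q).re
        = c^2 * (B i i).re + s^2 * (B q q).re := by
      rw [Complex.add_re, ← Complex.ofReal_pow, ← Complex.ofReal_pow,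
        Complex.re_ofReal_mul, Complex.re_ofReal_mul]
    rw [hre, hc2, hs2, hdU i, hdU q]
  · by_cases hiq : i = q
    · subst hiq
      rw [Function.update_self, rot_conj_diag_q hpq B c s hz, hcross, mul_zero, sub_zero]
      have hre : ((s:ℂ)^2 * B p p + (c:ℂ)^2 * B i i).re
          = s^2 * (B p p).re + c^2 * (B i i).re := by
        rw [Complex.add_re, ← Complex.ofReal_pow, ← Complex.ofReal_pow,
          Complex.re_ofReal_mul, Complex.re_ofReal_mul]
      rw [hre, hc2, hs2, hdU p, hdU i]
    · rw [Function.update_of_ne hiq, Function.update_of_ne hip,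
        rot_conj_diag_other hpq B c s z i hip hiq]
      exact hdU i

lemma permMatrixR_entry (σ : Equiv.Perm (Fin n)) (i j : Fin n) :
    σ.permMatrix ℝ i j = if σ i = j then 1 else 0 := by
  simp [Equiv.Perm.permMatrix, PEquiv.toMatrix_apply, Equiv.toPEquiv_apply, Option.mem_def]

/-- the eigenvalue vector is a member of the diagonal set -/
lemma eigen_mem {A : Matrix (Fin n) (Fin n) ℂ} (hA : A.IsHermitian) :
    hA.eigenvalues ∈ diagSet A := by
  refine ⟨star (hA.eigenvectorUnitary : Matrix (Fin n) (Fin n) ℂ),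
    Unitary.star_mem (hA.eigenvectorUnitary).2, fun i => ?_⟩
  have hs := hA.conjStarAlgAut_star_eigenvectorUnitary
  simp only [Unitary.conjStarAlgAut_apply, Unitary.coe_star, star_star] at hs
  rw [star_star, hs]
  simp

/-- easy direction : any diagonal is in the convex hull of permuted eigenvalues -/
lemma easy_dir {A : Matrix (Fin n) (Fin n) ℂ} (hA : A.IsHermitian)
    {d : Fin n → ℝ} (hd : d ∈ diagSet A) :
    d ∈ convexHull ℝ {x : Fin n → ℝ | ∃ τ : Equiv.Perm (Fin n), x = hA.eigenvalues ∘ τ} := by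
  obtain ⟨U, hU, hdU⟩ := hd
  set V : Matrix (Fin n) (Fin n) ℂ := (hA.eigenvectorUnitary : Matrix (Fin n) (Fin n) ℂ)
    with hVdef
  set W : Matrix (Fin n) (Fin n) ℂ := U * V with hWdef
  have hWu : W ∈ Matrix.unitaryGroup (Fin n) ℂ := mul_mem hU (hA.eigenvectorUnitary).2
  have hBW : U * A * star U
      = W * Matrix.diagonal (RCLike.ofReal ∘ hA.eigenvalues) * star W := by
    have hs := hA.spectral_theorem
    simp only [Unitary.conjStarAlgAut_apply] at hs
    rw [hWdef, conj_rearrange (Matrix.diagonal (RCLike.ofReal ∘ hA.eigenvalues)) V U,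
      hVdef, ← hs]
  -- the doubly stochastic matrix of squared moduli
  set M : Matrix (Fin n) (Fin n) ℝ := Matrix.of fun i j => Complex.normSq (W i j) with hMdef
  have hrow : ∀ i, ∑ j, M i j = 1 := by
    intro i
    have h1 : (W * star W) i i = 1 := by
      rw [Matrix.mem_unitaryGroup_iff.1 hWu]; simp
    have h2 : ∑ j, W i j * star (W i j) = 1 := by
      rw [← h1, Matrix.mul_apply]; rfl
    have h3 := congrArg Complex.re h2
    rw [Complex.re_sum] at h3
    simpa [hMdef, Complex.mul_conj, Complex.star_def] using h3
  have hcol : ∀ j, ∑ i, M i j = 1 := by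
    intro j
    have h1 : (star W * W) j j = 1 := by
      rw [Matrix.mem_unitaryGroup_iff'.1 hWu]; simp
    have h2 : ∑ i, star (W i j) * W i j = 1 := by
      rw [← h1, Matrix.mul_apply]; rfl
    have h3 := congrArg Complex.re h2
    rw [Complex.re_sum] at h3
    simpa [hMdef, mul_comm, Complex.mul_conj, Complex.star_def] using h3
  have hMds : M ∈ doublyStochastic ℝ (Fin n) := by
    rw [mem_doublyStochastic_iff_sum]
    exact ⟨fun i j => Complex.normSq_nonneg _, hrow, hcol⟩
  have hdM : ∀ i, d i = ∑ j, M i j * hA.eigenvalues j := by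
    intro i
    rw [hdU i, hBW]
    rw [Matrix.mul_apply]
    rw [Complex.re_sum]
    refine Finset.sum_congr rfl fun j _ => ?_
    rw [Matrix.mul_diagonal]
    have : W i j * (RCLike.ofReal ∘ hA.eigenvalues) j * star W j i
        = ((M i j * hA.eigenvalues j : ℝ) : ℂ) := by
      rw [Matrix.star_apply, Complex.star_def, Complex.ofReal_mul, hMdef, Matrix.of_apply,
        ← Complex.mul_conj]
      simp only [Function.comp_apply]
      have hco : (RCLike.ofReal (hA.eigenvalues j) : ℂ) = ((hA.eigenvalues j : ℝ) : ℂ) := rfl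
      rw [hco]; ring
    rw [this, Complex.ofReal_re]
  obtain ⟨w, hw0, hw1, hwM⟩ := exists_eq_sum_perm_of_mem_doublyStochastic hMds
  refine mem_convexHull_of_exists_fintype w (fun σ => hA.eigenvalues ∘ σ) hw0 hw1
    (fun σ => ⟨σ, rfl⟩) ?_
  funext i
  have hMw : ∀ i j, M i j = ∑ σ : Equiv.Perm (Fin n), w σ * (σ.permMatrix ℝ) i j := by
    intro i j
    conv_lhs => rw [← hwM]
    simp only [Matrix.sum_apply, Matrix.smul_apply, smul_eq_mul]
  rw [Finset.sum_apply]
  rw [hdM i]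
  symm
  have : ∀ σ : Equiv.Perm (Fin n), ∑ j, (σ.permMatrix ℝ) i j * hA.eigenvalues j
      = hA.eigenvalues (σ i) := by
    intro σ
    rw [Finset.sum_eq_single (σ i)]
    · simp [permMatrixR_entry, Equiv.toPEquiv_apply]
    · intro j _ hj
      rw [permMatrixR_entry, if_neg (fun h => hj h.symm), zero_mul]
    · exact fun h => absurd (Finset.mem_univ _) h
  calc ∑ j, M i j * hA.eigenvalues j
      = ∑ j, ∑ σ : Equiv.Perm (Fin n), w σ * (σ.permMatrix ℝ) i j * hA.eigenvalues j := by
        refine Finset.sum_congr rfl fun j _ => ?_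
        rw [hMw i j, Finset.sum_mul]
    _ = ∑ σ : Equiv.Perm (Fin n), ∑ j, w σ * ((σ.permMatrix ℝ) i j * hA.eigenvalues j) := by
        rw [Finset.sum_comm]
        simp [mul_assoc]
    _ = ∑ σ : Equiv.Perm (Fin n), w σ * hA.eigenvalues (σ i) := by
        refine Finset.sum_congr rfl fun σ _ => ?_
        rw [← Finset.mul_sum, this σ]
    _ = ∑ σ : Equiv.Perm (Fin n), (w σ • (hA.eigenvalues ∘ σ)) i := by
        simp

lemma hard_dir {A : Matrix (Fin n) (Fin n) ℂ} (hA : A.IsHermitian) {d : Fin n → ℝ}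
    (hx : d ∈ convexHull ℝ
      {x : Fin n → ℝ | ∃ τ : Equiv.Perm (Fin n), x = hA.eigenvalues ∘ τ}) :
    d ∈ diagSet A := by
  classical
  set lam := hA.eigenvalues with hlam
  set fs : Finset (Fin n → ℝ) :=
    Finset.image (fun σ : Equiv.Perm (Fin n) => lam ∘ (σ : Fin n → Fin n))
      Finset.univ with hfs
  have hset : {x : Fin n → ℝ | ∃ τ : Equiv.Perm (Fin n), x = lam ∘ τ} = ↑fs := by
    ext x; simp [hfs, eq_comm]
  rw [hset, Finset.convexHull_eq] at hx
  obtain ⟨w, hw0, hw1, hcm⟩ := hx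
  rw [Finset.centerMass_eq_of_sum_1 _ _ hw1] at hcm
  have hd : ∀ i, d i = ∑ y ∈ fs, w y * y i := by
    intro i; rw [← hcm]; simp [Finset.sum_apply]
  have hsumB : ∀ B : Finset (Fin n), ∑ i ∈ B, d i = ∑ y ∈ fs, w y * ∑ i ∈ B, y i := by
    intro B
    calc ∑ i ∈ B, d i = ∑ i ∈ B, ∑ y ∈ fs, w y * y i :=
          Finset.sum_congr rfl fun i _ => hd i
      _ = ∑ y ∈ fs, ∑ i ∈ B, w y * y i := Finset.sum_comm
      _ = ∑ y ∈ fs, w y * ∑ i ∈ B, y i := by simp [Finset.mul_sum]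
  have hperm : ∀ y ∈ fs, ∃ σ : Equiv.Perm (Fin n), y = lam ∘ σ := by
    intro y hy; obtain ⟨σ, _, rfl⟩ := Finset.mem_image.1 hy; exact ⟨σ, rfl⟩
  have hysum : ∀ y ∈ fs, ∑ i, y i = ∑ i, lam i := by
    intro y hy; obtain ⟨σ, rfl⟩ := hperm y hy
    calc ∑ i, (lam ∘ σ) i = ∑ i, lam (σ i) := rfl
      _ = ∑ i, lam i := Equiv.sum_comp σ lam
  refine hlp (diagSet A) (fun e he σ => diagSet_swap he σ)
    (fun e he p q hpq t ht0 ht1 => diagSet_T hA he p q hpq t ht0 ht1)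
    Finset.univ lam (eigen_mem hA) d (fun i hi => absurd (Finset.mem_univ i) hi) ?_ ?_
  · rw [hsumB]
    calc ∑ y ∈ fs, w y * ∑ i ∈ Finset.univ, y i = ∑ y ∈ fs, w y * ∑ i, lam i :=
          Finset.sum_congr rfl fun y hy => by rw [hysum y hy]
      _ = ∑ i, lam i := by rw [← Finset.sum_mul, hw1, one_mul]
  · intro B _
    have hfsne : fs.Nonempty :=
      ⟨lam ∘ (1 : Equiv.Perm (Fin n)), Finset.mem_image.2 ⟨1, Finset.mem_univ _, rfl⟩⟩
    obtain ⟨y0, hy0, hy0max⟩ := fs.exists_max_image (fun y => ∑ i ∈ B, y i) hfsne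
    obtain ⟨σ, rfl⟩ := hperm y0 hy0
    refine ⟨B.image σ, Finset.subset_univ _,
      Finset.card_image_of_injective B σ.injective, ?_⟩
    have h1 : ∑ i ∈ B, d i ≤ ∑ i ∈ B, (lam ∘ σ) i := by
      rw [hsumB]
      calc ∑ y ∈ fs, w y * ∑ i ∈ B, y i ≤ ∑ y ∈ fs, w y * ∑ i ∈ B, (lam ∘ σ) i :=
            Finset.sum_le_sum fun y hy =>
              mul_le_mul_of_nonneg_left (hy0max y hy) (hw0 y hy)
        _ = ∑ i ∈ B, (lam ∘ σ) i := by rw [← Finset.sum_mul, hw1, one_mul]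
    have h2 : ∑ i ∈ B.image σ, lam i = ∑ i ∈ B, (lam ∘ σ) i :=
      Finset.sum_image (fun i _ j _ h => σ.injective h)
    rw [h2]; exact h1


/-- **Kostant convexity theorem** for the unitary group `U(n)` (Annexe E; the
Schur–Horn form).  Coadjoint orbits of `U(n)` are the conjugation orbits
`X = {U A U*}` of a Hermitian matrix `A`; the projection `π : 𝔤* → 𝔱*` to the dual
of the Cartan subalgebra of diagonal matrices reads off the diagonal, and
`X ∩ 𝔱*` is the Weyl-group (symmetric-group) orbit of the eigenvalue vector of
`A`.  The theorem asserts `π(X) = conv (W · μ)`: the set of diagonals of the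
matrices in the orbit of `A` equals the convex hull of the permutations of the
eigenvalues of `A`. -/
theorem kostant_convexity_unitaryGroup {n : ℕ}
    (A : Matrix (Fin n) (Fin n) ℂ) (hA : A.IsHermitian) :
    {d : Fin n → ℝ | ∃ U ∈ Matrix.unitaryGroup (Fin n) ℂ,
        ∀ i : Fin n, d i = ((U * A * star U) i i).re}
      = convexHull ℝ
          {x : Fin n → ℝ | ∃ τ : Equiv.Perm (Fin n), x = hA.eigenvalues ∘ τ} := by
  ext d
  exact ⟨fun hd => easy_dir hA hd, fun hx => hard_dir hA hx⟩
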